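/- arXiv:2509.02755 — 2 statements merged into one kernel-verified Lean document; each statement's English description precedes it below -/
import Mathlib

section
/- Let (X,d) be a metric space equipped additionally with a pseudometric ρ. Suppose X = X₁ ∪ ⋯ ∪ Xₙ for finitely many closed subsets Xᵢ such that ρ = d when restricted to Xᵢ × Xᵢ for each i. Then the intrinsic pseudometric induced by ρ equals the intrinsic metric induced by d, and both are ≥ d. -/
open unitInterval

noncomputable section

variable {X : Type*}

/-- A pseudometric: zero on the diagonal, symmetric, triangle inequality. -/
def IsPseudometric (m : X → X → ℝ) : Prop :=
  (∀ x, m x x = 0) ∧ (∀ x y, m x y = m y x) ∧ (∀ x y z, m x z ≤ m x y + m y z)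

/-- A partition 0 = t₀ ≤ ⋯ ≤ tₙ = 1 of the unit interval. -/
def IsPartition {n : ℕ} (t : Fin (n + 1) → I) : Prop :=
  Monotone t ∧ t 0 = 0 ∧ t (Fin.last n) = 1

/-- The sum Σᵢ m(γ(tᵢ₋₁), γ(tᵢ)) over a partition. -/
def partSum (m : X → X → ℝ) (γ : I → X) {n : ℕ} (t : Fin (n + 1) → I) : ℝ :=
  ∑ i : Fin n, m (γ (t i.castSucc)) (γ (t i.succ))

/-- The length of a path with respect to a pseudometric: the supremum of Σ m over partitions. -/
def pathLength (m : X → X → ℝ) (γ : I → X) : ENNReal :=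
  ⨆ (n : ℕ) (t : {t : Fin (n + 1) → I // IsPartition t}), ENNReal.ofReal (partSum m γ t.1)

/-- The intrinsic pseudometric induced by `m`: the infimum of path lengths over
continuous paths from `x` to `y` (`⊤` if there is no such path). -/
def intrinsicDist [TopologicalSpace X] (m : X → X → ℝ) (x y : X) : ENNReal :=
  ⨅ (γ : {γ : I → X // Continuous γ ∧ γ 0 = x ∧ γ 1 = y}), pathLength m γ.1

namespace Stmt0Aux

/-- Sum of `m (γ a) (γ b)` over consecutive pairs of a list. -/
def lsum (m : X → X → ℝ) (γ : I → X) : List I → ℝ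
  | [] => 0
  | [_] => 0
  | a :: b :: l => m (γ a) (γ b) + lsum m γ (b :: l)

lemma lsum_congr (m₁ m₂ : X → X → ℝ) (γ : I → X) :
    ∀ l : List I, l.Chain' (fun u v => m₁ (γ u) (γ v) = m₂ (γ u) (γ v)) →
      lsum m₁ γ l = lsum m₂ γ l
  | [], _ => rfl
  | [_], _ => rfl
  | a :: b :: l, h => by
      rw [show @List.Chain' = @List.IsChain from rfl, List.isChain_cons_cons] at h
      simp only [lsum, h.1, lsum_congr m₁ m₂ γ (b :: l) h.2]

lemma lsum_le (m : X → X → ℝ) (hm0 : ∀ x, m x x = 0)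
    (htri : ∀ x y z, m x z ≤ m x y + m y z) (γ : I → X) :
    ∀ (l : List I) (a b : I), l.head? = some a → l.getLast? = some b →
      m (γ a) (γ b) ≤ lsum m γ l
  | [], a, b, ha, _ => by simp at ha
  | [c], a, b, ha, hb => by
      have hca : c = a := by simpa using ha
      have hcb : c = b := by simpa using hb
      rw [← hca, ← hcb]
      simp [lsum, hm0]
  | c :: d :: l, a, b, ha, hb => by
      have hca : c = a := by simpa using ha
      rw [← hca]
      have hb' : (d :: l).getLast? = some b := by
        rw [List.getLast?_cons_cons] at hb; exact hb
      calc m (γ c) (γ b) ≤ m (γ c) (γ d) + m (γ d) (γ b) := htri _ _ _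
        _ ≤ m (γ c) (γ d) + lsum m γ (d :: l) := by
            have := lsum_le m hm0 htri γ (d :: l) d b rfl hb'
            linarith
        _ = lsum m γ (c :: d :: l) := rfl

lemma lsum_append (m : X → X → ℝ) (γ : I → X) :
    ∀ (l₁ l₂ : List I) (x y : I), l₁.getLast? = some x → l₂.head? = some y →
      lsum m γ (l₁ ++ l₂) = lsum m γ l₁ + m (γ x) (γ y) + lsum m γ l₂
  | [], _, x, y, hx, _ => by simp at hx
  | [a], l₂, x, y, hx, hy => by
      have hax : a = x := by simpa using hx
      rw [← hax]
      obtain ⟨l₂', rfl⟩ : ∃ l₂', l₂ = y :: l₂' := by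
        cases l₂ with
        | nil => simp at hy
        | cons c l₂' =>
            obtain rfl : c = y := by simpa using hy
            exact ⟨l₂', rfl⟩
      show m (γ a) (γ y) + lsum m γ (y :: l₂') = 0 + m (γ a) (γ y) + lsum m γ (y :: l₂')
      ring
  | a :: c :: l₁, l₂, x, y, hx, hy => by
      rw [List.getLast?_cons_cons] at hx
      have ih := lsum_append m γ (c :: l₁) l₂ x y hx hy
      show m (γ a) (γ c) + lsum m γ (c :: (l₁ ++ l₂)) =
        (m (γ a) (γ c) + lsum m γ (c :: l₁)) + m (γ x) (γ y) + lsum m γ l₂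
      rw [show (c :: (l₁ ++ l₂)) = (c :: l₁) ++ l₂ from rfl, ih]
      ring

lemma chain_exists (R : I → I → Prop)
    (hR : ∀ u : I, ∃ ε > 0, ∀ v : I, dist u v < ε → R u v ∧ R v u)
    (a b : I) (hab : a ≤ b) :
    ∃ l : List I, l.Chain' (fun u v => u ≤ v ∧ R u v) ∧
      l.head? = some a ∧ l.getLast? = some b := by
  set S : I → I → Prop := fun u v => u ≤ v ∧ R u v with hS
  set Good : I → Prop := fun t =>
    ∃ l : List I, l.Chain' S ∧ l.head? = some a ∧ l.getLast? = some t with hGood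
  set A : Set ℝ := {x | ∃ t : I, (t : ℝ) = x ∧ t ≤ b ∧ Good t} with hA
  have haA : (a : ℝ) ∈ A := ⟨a, rfl, hab, [a], List.isChain_singleton a, rfl, rfl⟩
  have hAne : A.Nonempty := ⟨a, haA⟩
  have hbdd : BddAbove A := by
    refine ⟨(b : ℝ), ?_⟩
    rintro x ⟨t, rfl, htb, -⟩
    exact htb
  set c' : ℝ := sSup A with hc'
  have hac : (a : ℝ) ≤ c' := le_csSup hbdd haA
  have hcb : c' ≤ (b : ℝ) := csSup_le hAne (by rintro x ⟨t, rfl, htb, -⟩; exact htb)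
  have hcI : c' ∈ Set.Icc (0:ℝ) 1 := ⟨le_trans a.2.1 hac, le_trans hcb b.2.2⟩
  set c : I := ⟨c', hcI⟩ with hcdef
  obtain ⟨ε, hε, hεR⟩ := hR c
  have hGc : Good c ∧ a ≤ c := by
    obtain ⟨x, hxA, hx⟩ := exists_lt_of_lt_csSup hAne (show c' - ε < c' by linarith)
    obtain ⟨t, rfl, htb, l, hl, hlh, hll⟩ := hxA
    have htc : t ≤ c := le_csSup hbdd ⟨t, rfl, htb, l, hl, hlh, hll⟩
    have hdist : dist c t < ε := by
      rw [Subtype.dist_eq, Real.dist_eq, abs_sub_comm, abs_of_nonpos (by simpa using htc)]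
      simp only [neg_sub]
      have : (t:ℝ) ≤ c' := htc
      linarith
    obtain ⟨hRct, hRtc⟩ := hεR t hdist
    refine ⟨⟨l ++ [c], ?_, ?_, List.getLast?_concat (l := l)⟩, ?_⟩
    · rw [show @List.Chain' = @List.IsChain from rfl, List.isChain_append]
      refine ⟨hl, List.isChain_singleton c, ?_⟩
      intro x hx' y hy'
      rw [hll] at hx'
      simp only [Option.mem_def, Option.some.injEq, List.head?_cons] at hx' hy'
      subst hx'
      subst hy'
      exact ⟨htc, hRtc⟩
    · rw [List.head?_append, hlh]; rfl
    · have : (a:ℝ) ≤ c' := hac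
      exact this
  have hcb' : c = b := by
    by_contra hne
    have hclt : (c':ℝ) < b := lt_of_le_of_ne hcb (fun h => hne (Subtype.ext h))
    set d' : ℝ := min (b : ℝ) (c' + ε / 2) with hd'
    have hcd : c' < d' := lt_min hclt (by linarith)
    have hdI : d' ∈ Set.Icc (0:ℝ) 1 :=
      ⟨le_trans hcI.1 hcd.le, le_trans (min_le_left _ _) b.2.2⟩
    set v : I := ⟨d', hdI⟩ with hvdef
    have hdistv : dist c v < ε := by
      rw [Subtype.dist_eq, Real.dist_eq, abs_of_nonpos (by simp [hvdef]; linarith)]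
      have : d' ≤ c' + ε / 2 := min_le_right _ _
      simp only [hvdef]
      linarith
    obtain ⟨hRcv, hRvc⟩ := hεR v hdistv
    obtain ⟨⟨l, hl, hlh, hll⟩, hac'⟩ := hGc
    have hvA : d' ∈ A := by
      refine ⟨v, rfl, (by show (d':ℝ) ≤ (b:ℝ); exact min_le_left _ _),
        l ++ [v], ?_, ?_, List.getLast?_concat (l := l)⟩
      · rw [show @List.Chain' = @List.IsChain from rfl, List.isChain_append]
        refine ⟨hl, List.isChain_singleton v, ?_⟩
        intro x hx' y hy'
        rw [hll] at hx'
        simp only [Option.mem_def, Option.some.injEq, List.head?_cons] at hx' hy'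
        subst hx'; subst hy'
        exact ⟨hcd.le, hRcv⟩
      · rw [List.head?_append, hlh]; rfl
    have := le_csSup hbdd hvA
    linarith
  obtain ⟨⟨l, hl, hlh, hll⟩, -⟩ := hGc
  exact ⟨l, hl, hlh, by rw [hll, hcb']⟩

lemma partSum_eq_lsum (m : X → X → ℝ) (γ : I → X) :
    ∀ (n : ℕ) (t : Fin (n + 1) → I), partSum m γ t = lsum m γ (List.ofFn t)
  | 0, t => by
      simp [partSum, List.ofFn_succ, lsum]
  | (n+1), t => by
      have ih := partSum_eq_lsum m γ n (fun i => t i.succ)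
      have h2 : List.ofFn (fun i : Fin (n+1) => t i.succ) =
          t (0 : Fin (n+1)).succ :: List.ofFn (fun i : Fin n => t i.succ.succ) :=
        List.ofFn_succ
      rw [List.ofFn_succ, h2]
      show partSum m γ t = m (γ (t 0)) (γ (t (0 : Fin (n+1)).succ)) +
        lsum m γ (t (0 : Fin (n+1)).succ :: List.ofFn (fun i : Fin n => t i.succ.succ))
      rw [← h2, ← ih]
      show ∑ i : Fin (n+1), m (γ (t i.castSucc)) (γ (t i.succ)) =
        m (γ (t 0)) (γ (t (0 : Fin (n+1)).succ)) +
          ∑ i : Fin n, m (γ (t (i.castSucc).succ)) (γ (t (i.succ).succ))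
      rw [Fin.sum_univ_succ]
      congr 1

lemma ofReal_lsum_le_pathLength (m : X → X → ℝ) (γ : I → X) (L : List I)
    (hch : L.Chain' (· ≤ ·)) (hh : L.head? = some 0) (hl : L.getLast? = some 1) :
    ENNReal.ofReal (lsum m γ L) ≤ pathLength m γ := by
  obtain ⟨a, L', rfl⟩ : ∃ a L', L = a :: L' := by
    cases L with
    | nil => simp at hh
    | cons a L' => exact ⟨a, L', rfl⟩
  have hLne : (a :: L') ≠ [] := List.cons_ne_nil a L'
  have hlen : (a :: L').length = L'.length + 1 := rfl
  set t : Fin (L'.length + 1) → I := fun i => (a :: L').get (Fin.cast hlen.symm i) with ht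
  have hofn : List.ofFn t = a :: L' := by
    apply List.ext_getElem
    · simp
    · intro i h1 h2
      rw [List.getElem_ofFn]
      rfl
  have hpart : IsPartition t := by
    have hpw : (a :: L').Pairwise (· ≤ ·) := List.isChain_iff_pairwise.mp hch
    refine ⟨?_, ?_, ?_⟩
    · intro i j hij
      rcases eq_or_lt_of_le hij with h | h
      · rw [h]
      · exact List.pairwise_iff_get.mp hpw _ _ (by exact h)
    · have h0 : t 0 = a := rfl
      rw [h0]
      simpa using hh
    · have h1 : t (Fin.last L'.length) = (a :: L').get ⟨L'.length, by simp⟩ := rfl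
      rw [h1]
      have h2 := List.getLast?_eq_getLast (l := a :: L') hLne
      rw [h2, Option.some.injEq] at hl
      rw [← hl, List.getLast_eq_getElem]
      rfl
  calc ENNReal.ofReal (lsum m γ (a :: L')) = ENNReal.ofReal (partSum m γ t) := by
        rw [partSum_eq_lsum, hofn]
    _ ≤ pathLength m γ := by
        rw [pathLength]
        exact le_iSup_of_le L'.length (le_iSup_of_le ⟨t, hpart⟩ le_rfl)

lemma pathLength_le (m₁ m₂ : X → X → ℝ) (h₁ : IsPseudometric m₁) (γ : I → X)
    (hloc : ∀ u : I, ∃ ε > 0, ∀ v : I, dist u v < ε →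
      m₁ (γ u) (γ v) = m₂ (γ u) (γ v) ∧ m₁ (γ v) (γ u) = m₂ (γ v) (γ u)) :
    pathLength m₁ γ ≤ pathLength m₂ γ := by
  obtain ⟨h0, hsym, htri⟩ := h₁
  set R : I → I → Prop := fun u v => m₁ (γ u) (γ v) = m₂ (γ u) (γ v) with hRdef
  have hR : ∀ u : I, ∃ ε > 0, ∀ v : I, dist u v < ε → R u v ∧ R v u := hloc
  have hRrefl : ∀ u : I, R u u := by
    intro u
    obtain ⟨ε, hε, h⟩ := hR u
    exact (h u (by simp [hε])).1
  have key : ∀ (n : ℕ) (t : Fin (n + 1) → I), Monotone t →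
      ∃ L : List I, L.Chain' (fun u v => u ≤ v ∧ R u v) ∧ L.head? = some (t 0) ∧
        L.getLast? = some (t (Fin.last n)) ∧ partSum m₁ γ t ≤ lsum m₁ γ L := by
    intro n
    induction n with
    | zero =>
        intro t ht
        refine ⟨[t 0], List.isChain_singleton _, rfl, rfl, ?_⟩
        simp [partSum, lsum]
    | succ n ih =>
        intro t ht
        obtain ⟨L, hLch, hLh, hLl, hLsum⟩ := ih (fun i => t i.castSucc)
          (fun i j hij => ht (by exact hij))
        obtain ⟨l, hlch, hlh, hll⟩ := chain_exists R hR (t (Fin.last n).castSucc)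
          (t (Fin.last (n+1))) (ht (Fin.le_last _))
        simp only [Fin.castSucc_zero] at hLh
        refine ⟨L ++ l, ?_, ?_, ?_, ?_⟩
        · rw [show @List.Chain' = @List.IsChain from rfl, List.isChain_append]
          refine ⟨hLch, hlch, ?_⟩
          intro x hx y hy
          rw [hLl] at hx
          rw [hlh] at hy
          simp only [Option.mem_def, Option.some.injEq] at hx hy
          subst hx; subst hy
          exact ⟨le_refl _, hRrefl _⟩
        · have hLne : L ≠ [] := fun h => by simp [h] at hLh
          rw [List.head?_append, hLh]
          rfl
        · have hlne : l ≠ [] := fun h => by simp [h] at hlh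
          rw [List.getLast?_append, hll]
          rfl
        · have hseg : m₁ (γ (t (Fin.last n).castSucc)) (γ (t (Fin.last (n+1)))) ≤ lsum m₁ γ l :=
            lsum_le m₁ h0 htri γ l _ _ hlh hll
          have happ : lsum m₁ γ (L ++ l) = lsum m₁ γ L +
              m₁ (γ (t (Fin.last n).castSucc)) (γ (t (Fin.last n).castSucc)) + lsum m₁ γ l :=
            lsum_append m₁ γ L l _ _ hLl hlh
          have hps : partSum m₁ γ t = partSum m₁ γ (fun i : Fin (n+1) => t i.castSucc) +
              m₁ (γ (t (Fin.last n).castSucc)) (γ (t (Fin.last (n+1)))) := by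
            show ∑ i : Fin (n+1), m₁ (γ (t i.castSucc)) (γ (t i.succ)) = _
            rw [Fin.sum_univ_castSucc]
            congr 1
          rw [hps, happ, h0]
          linarith
  rw [pathLength]
  apply iSup_le
  intro n
  apply iSup_le
  rintro ⟨t, htm, ht0, ht1⟩
  obtain ⟨L, hch, hh, hl, hsum⟩ := key n t htm
  have hch1 : L.Chain' (· ≤ ·) := List.IsChain.imp (fun _ _ h => h.1) hch
  have hch2 : L.Chain' (fun u v => m₁ (γ u) (γ v) = m₂ (γ u) (γ v)) := List.IsChain.imp (fun _ _ h => h.2) hch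
  calc ENNReal.ofReal (partSum m₁ γ t) ≤ ENNReal.ofReal (lsum m₁ γ L) :=
        ENNReal.ofReal_le_ofReal hsum
    _ = ENNReal.ofReal (lsum m₂ γ L) := by rw [lsum_congr m₁ m₂ γ L hch2]
    _ ≤ pathLength m₂ γ := ofReal_lsum_le_pathLength m₂ γ L hch1 (ht0 ▸ hh) (ht1 ▸ hl)

lemma loc_agree {X : Type*} [MetricSpace X] {n : ℕ} (C : Fin n → Set X)
    (hclosed : ∀ i, IsClosed (C i)) (hcover : (⋃ i, C i) = Set.univ)
    (γ : I → X) (hγ : Continuous γ) (u : I) :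
    ∃ ε > 0, ∀ v : I, dist u v < ε → ∃ i, γ u ∈ C i ∧ γ v ∈ C i := by
  set U : Set I := ⋂ i ∈ {i : Fin n | γ u ∉ C i}, γ ⁻¹' (C i)ᶜ with hU
  have hUopen : IsOpen U :=
    (Set.toFinite _).isOpen_biInter (fun i _ => (hclosed i).isOpen_compl.preimage hγ)
  have hUmem : u ∈ U := by
    rw [hU]
    refine Set.mem_iInter₂.mpr (fun i hi => ?_)
    exact hi
  obtain ⟨ε, hε, hball⟩ := Metric.isOpen_iff.mp hUopen u hUmem
  refine ⟨ε, hε, fun v hv => ?_⟩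
  have hvU : v ∈ U := hball (by rwa [Metric.mem_ball, dist_comm])
  obtain ⟨Ci, ⟨i, rfl⟩, hi⟩ : γ v ∈ ⋃ i, C i := by rw [hcover]; trivial
  by_cases h : γ u ∈ C i
  · exact ⟨i, h, hi⟩
  · exact absurd hi (Set.mem_iInter₂.mp hvU i h)

end Stmt0Aux

open Stmt0Aux in
/-- if a metric space `X` is covered by finitely many closed sets on each of
which a pseudometric `ρ` agrees with the metric `d = dist`, then the intrinsic
pseudometrics of `ρ` and `d` agree, and both dominate `d`. -/
theorem stmt0 {X : Type*} [MetricSpace X] (ρ : X → X → ℝ) (hρ : IsPseudometric ρ)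
    (n : ℕ) (C : Fin n → Set X)
    (hclosed : ∀ i, IsClosed (C i))
    (hcover : (⋃ i, C i) = Set.univ)
    (hagree : ∀ i, ∀ x ∈ C i, ∀ y ∈ C i, ρ x y = dist x y) :
    (∀ x y : X, intrinsicDist ρ x y = intrinsicDist (fun a b => dist a b) x y) ∧
    (∀ x y : X, ENNReal.ofReal (dist x y) ≤ intrinsicDist (fun a b => dist a b) x y) := by
  have hd : IsPseudometric (fun a b : X => dist a b) :=
    ⟨fun x => dist_self x, fun x y => dist_comm x y, fun x y z => dist_triangle x y z⟩
  constructor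
  · intro x y
    refine iInf_congr (fun γ => ?_)
    obtain ⟨hc, h0, h1⟩ := γ.2
    have hloc : ∀ u : I, ∃ ε > 0, ∀ v : I, dist u v < ε →
        ρ (γ.1 u) (γ.1 v) = dist (γ.1 u) (γ.1 v) ∧ ρ (γ.1 v) (γ.1 u) = dist (γ.1 v) (γ.1 u) := by
      intro u
      obtain ⟨ε, hε, h⟩ := loc_agree C hclosed hcover γ.1 hc u
      refine ⟨ε, hε, fun v hv => ?_⟩
      obtain ⟨i, hu, hv'⟩ := h v hv
      exact ⟨hagree i _ hu _ hv', hagree i _ hv' _ hu⟩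
    refine le_antisymm (pathLength_le ρ _ hρ γ.1 hloc) (pathLength_le _ ρ hd γ.1 ?_)
    intro u
    obtain ⟨ε, hε, h⟩ := hloc u
    exact ⟨ε, hε, fun v hv => ⟨((h v hv).1).symm, ((h v hv).2).symm⟩⟩
  · intro x y
    refine le_iInf (fun γ => ?_)
    obtain ⟨hc, h0, h1⟩ := γ.2
    set t : Fin 2 → I := ![0, 1] with htdef
    have hpart : IsPartition t := by
      refine ⟨?_, rfl, rfl⟩
      intro i j hij
      fin_cases i <;> fin_cases j <;> simp_all
    have hps : partSum (fun a b : X => dist a b) γ.1 t = dist x y := by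
      rw [partSum, Fin.sum_univ_one]
      have e0 : t (Fin.castSucc 0) = 0 := rfl
      have e1 : t (Fin.succ 0) = 1 := rfl
      rw [e0, e1, h0, h1]
    calc ENNReal.ofReal (dist x y)
        = ENNReal.ofReal (partSum (fun a b : X => dist a b) γ.1 t) := by rw [hps]
      _ ≤ pathLength (fun a b : X => dist a b) γ.1 := by
          rw [pathLength]
          exact le_iSup_of_le 1 (le_iSup_of_le ⟨t, hpart⟩ le_rfl)
end
end

section
/- Let (X,d) be a metric space covered by finitely many closed sets X₁,…,Xₙ. Then for any continuous path γ:[0,1]→X there exists a partition 0 = s₀ ≤ s₁ ≤ ⋯ ≤ sₘ = 1 with m ≤ n such that for each i=1,…,m, both γ(sᵢ₋₁) and γ(sᵢ) lie in a common set X_{j(i)}. -/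
open unitInterval

noncomputable section

variable {X : Type*}

/-- for a continuous path in a metric space covered by finitely many closed
sets, there is a partition with at most `n` pieces such that the two endpoints of each
piece lie in a common covering set. -/
theorem stmt1 {X : Type*} [MetricSpace X]
    (n : ℕ) (C : Fin n → Set X)
    (hclosed : ∀ i, IsClosed (C i))
    (hcover : (⋃ i, C i) = Set.univ)
    (γ : I → X) (hγ : Continuous γ) :
    ∃ m : ℕ, m ≤ n ∧ ∃ s : Fin (m + 1) → I, IsPartition s ∧
      ∀ i : Fin m, ∃ j : Fin n, γ (s i.castSucc) ∈ C j ∧ γ (s i.succ) ∈ C j := by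
  have hmem : ∀ t : I, ∃ j, γ t ∈ C j := by
    intro t
    have : γ t ∈ ⋃ i, C i := hcover ▸ Set.mem_univ _
    simpa using this
  -- the greedy step
  have key : ∀ t : I, ∃ t' : I, t ≤ t' ∧ (∃ j, γ t ∈ C j ∧ γ t' ∈ C j) ∧
      ∀ u : I, t' < u → ∀ j, γ t ∈ C j → γ u ∉ C j := by
    intro t
    set K : Set I := Set.Ici t ∩ ⋃ j, ⋃ (_ : γ t ∈ C j), γ ⁻¹' (C j) with hK
    have hKclosed : IsClosed K :=
      isClosed_Ici.inter (isClosed_iUnion_of_finite fun j =>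
        isClosed_iUnion_of_finite fun _ => (hclosed j).preimage hγ)
    have hKne : K.Nonempty := by
      obtain ⟨j, hj⟩ := hmem t
      exact ⟨t, le_refl t, Set.mem_iUnion.2 ⟨j, Set.mem_iUnion.2 ⟨hj, hj⟩⟩⟩
    obtain ⟨t', ht'K, hub⟩ := hKclosed.isCompact.exists_isGreatest hKne
    obtain ⟨hle, hmemK⟩ := ht'K
    refine ⟨t', hle, ?_, ?_⟩
    · simpa using hmemK
    · intro u hu j hj hju
      exact absurd (hub ⟨le_trans hle hu.le, Set.mem_iUnion.2 ⟨j, Set.mem_iUnion.2 ⟨hj, hju⟩⟩⟩)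
        (not_le.2 hu)
  choose φ hle hwit hmax using key
  -- strictness
  have hstrict : ∀ t : I, t < 1 → t < φ t := by
    intro t ht
    by_contra h
    have hφt : φ t = t := le_antisymm (not_lt.1 h) (hle t)
    have hne : Filter.NeBot (nhdsWithin t (Set.Ioi t)) := nhdsGT_neBot_of_exists_gt ⟨1, ht⟩
    have hev : ∀ᶠ u in nhdsWithin t (Set.Ioi t), ∃ j, γ u ∈ C j :=
      Filter.Eventually.of_forall fun u => hmem u
    have hfreq : ∃ j, ∃ᶠ u in nhdsWithin t (Set.Ioi t), γ u ∈ C j := by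
      by_contra hc
      push_neg at hc
      have hall : ∀ᶠ u in nhdsWithin t (Set.Ioi t), ∀ j, γ u ∉ C j :=
        Filter.eventually_all.2 hc
      obtain ⟨u, hu1, hu2⟩ := (hev.and hall).exists
      obtain ⟨j, hj⟩ := hu1
      exact hu2 j hj
    obtain ⟨j, hfj⟩ := hfreq
    have htend : Filter.Tendsto γ (nhdsWithin t (Set.Ioi t)) (nhds (γ t)) :=
      ((hγ.tendsto t).mono_left nhdsWithin_le_nhds)
    have hγt : γ t ∈ C j := (hclosed j).mem_of_frequently_of_tendsto hfj htend
    have hfr2 : ∃ᶠ u in nhdsWithin t (Set.Ioi t), γ u ∈ C j ∧ u ∈ Set.Ioi t :=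
      hfj.and_eventually self_mem_nhdsWithin
    obtain ⟨u, hu1, hu2⟩ := hfr2.exists
    have hltu : φ t < u := by rw [hφt]; exact hu2
    exact hmax t u hltu j hγt hu1
  -- the sequence
  set seq : ℕ → I := fun k => φ^[k] 0 with hseq
  have hsucc : ∀ k, seq (k + 1) = φ (seq k) := by
    intro k; simp [hseq, Function.iterate_succ_apply']
  have hmono : Monotone seq :=
    monotone_nat_of_le_succ fun k => (hsucc k) ▸ hle (seq k)
  have hlast : seq n = 1 := by
    by_contra h1
    have hn1 : seq n < 1 := lt_of_le_of_ne unitInterval.le_one' h1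
    have hlt1 : ∀ k, k ≤ n → seq k < 1 := fun k hk => lt_of_le_of_lt (hmono hk) hn1
    have hstep : ∀ k, k ≤ n → seq k < seq (k + 1) := fun k hk =>
      (hsucc k) ▸ hstrict (seq k) (hlt1 k hk)
    have hwit' : ∀ k : Fin (n + 1), ∃ j, γ (seq k) ∈ C j ∧ γ (seq (k + 1)) ∈ C j := by
      intro k
      obtain ⟨j, hj1, hj2⟩ := hwit (seq k)
      exact ⟨j, hj1, (hsucc k) ▸ hj2⟩
    choose w hw1 hw2 using hwit'
    have haux : ∀ k l : Fin (n + 1), (k : ℕ) < (l : ℕ) → w k ≠ w l := by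
      intro k l hklt hkl
      have hl : (l : ℕ) ≤ n := Nat.lt_succ_iff.1 l.isLt
      have h1 : seq ((k : ℕ) + 1) ≤ seq l := hmono hklt
      have h2 : seq (l : ℕ) < seq ((l : ℕ) + 1) := hstep l hl
      have hgt : φ (seq k) < seq ((l : ℕ) + 1) := by
        rw [← hsucc k]; exact lt_of_le_of_lt h1 h2
      exact hmax (seq k) (seq ((l : ℕ) + 1)) hgt (w k) (hw1 k) (hkl ▸ hw2 l)
    have hinj : Function.Injective w := by
      intro k l hkl
      rcases lt_trichotomy (k : ℕ) (l : ℕ) with h | h | h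
      · exact absurd hkl (haux k l h)
      · exact Fin.ext h
      · exact absurd hkl.symm (haux l k h)
    have hcard := Fintype.card_le_of_injective w hinj
    simp at hcard
  refine ⟨n, le_refl n, fun i => seq i, ⟨?_, ?_, ?_⟩, ?_⟩
  · intro a b hab
    exact hmono (Fin.le_def.1 hab)
  · rfl
  · exact hlast
  · intro i
    obtain ⟨j, hj1, hj2⟩ := hwit (seq i)
    refine ⟨j, hj1, ?_⟩
    show γ (seq ((i : ℕ) + 1)) ∈ C j
    rw [hsucc]
    exact hj2
end
end
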